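/- Let k ≥ 2, let w ∈ {right, down}^{k−1} be the step word of a stair with k boxes and let v : {0,…,k−1} → ℤ be its favorite condition. Let S = {a, a+1, …, b} be an interval of boxes with 1 ≤ a and b ≤ k−2, and suppose its two cuts have the same type: either steps w_{a−1} and w_b are both down steps (two horizontal cuts) or both right steps (two vertical cuts). Then Σ_{i∈S} v(i) = 0. (This is the Remark that θ_𝓕(𝓔) = 0 whenever 𝓔 is a connected subrepresentation of a toric G-constellation whose substair has two horizontal cuts or two vertical cuts.) -/

import Mathlib

/-- A step of a stair: a right step `+(1,0)` or a down step `+(0,-1)`. -/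
inductive Step
  | right
  | down
deriving DecidableEq, BEq

/-- Box `i` of a stair with `k` boxes and step word `w` is a generator. -/
def IsGenBox (k : ℕ) (w : ℕ → Step) (i : ℕ) : Prop :=
  (i = 0 ∨ w (i - 1) = Step.down) ∧ (i = k - 1 ∨ w i = Step.right)

/-- Box `i` of a stair with `k` boxes and step word `w` is an antigenerator. -/
def IsAntigenBox (k : ℕ) (w : ℕ → Step) (i : ℕ) : Prop :=
  (i = 0 ∨ w (i - 1) = Step.right) ∧ (i = k - 1 ∨ w i = Step.down)

instance (k : ℕ) (w : ℕ → Step) : DecidablePred (IsGenBox k w) := fun i => by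
  unfold IsGenBox; infer_instance

instance (k : ℕ) (w : ℕ → Step) : DecidablePred (IsAntigenBox k w) := fun i => by
  unfold IsAntigenBox; infer_instance

/-- The favorite condition of the stair with `k` boxes and step word `w`. -/
def fav (k : ℕ) (w : ℕ → Step) (i : ℕ) : ℤ :=
  if IsGenBox k w i then (if i = 0 ∨ i = k - 1 then -1 else -2)
  else if IsAntigenBox k w i then (if i = 0 ∨ i = k - 1 then 1 else 2)
  else 0


def gval : Step → ℤ
  | Step.right => -1
  | Step.down => 1

lemma fav_interior (k : ℕ) (hk : 2 ≤ k) (w : ℕ → Step) (i : ℕ)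
    (h1 : 1 ≤ i) (h2 : i ≤ k - 2) :
    fav k w i = gval (w i) - gval (w (i - 1)) := by
  have h0 : i ≠ 0 := by omega
  have hk1 : i ≠ k - 1 := by omega
  cases hw1 : w i <;> cases hw2 : w (i - 1) <;>
    simp [fav, IsGenBox, IsAntigenBox, gval, hw1, hw2, h0, hk1]

/-- Let `S = {a, …, b}` be an interval of boxes of a stair with `k ≥ 2`
boxes, with `1 ≤ a` and `b ≤ k-2`, whose two cuts have the same type: steps `w_{a-1}` and
`w_b` are both down steps (two horizontal cuts) or both right steps (two vertical cuts).
Then the favorite condition sums to `0` over `S`. -/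
theorem stmt13 (k : ℕ) (hk : 2 ≤ k) (w : ℕ → Step) (a b : ℕ)
    (ha : 1 ≤ a) (hab : a ≤ b) (hbk : b ≤ k - 2)
    (hcuts : (w (a - 1) = Step.down ∧ w b = Step.down) ∨
      (w (a - 1) = Step.right ∧ w b = Step.right)) :
    ∑ i ∈ Finset.Icc a b, fav k w i = 0 := by
  have hsum : ∑ i ∈ Finset.Icc a b, fav k w i
      = ∑ j ∈ Finset.range (b + 1 - a), fav k w (a + j) := by
    rw [← Finset.Ico_add_one_right_eq_Icc, Finset.sum_Ico_eq_sum_range]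
  rw [hsum]
  have hterm : ∀ j ∈ Finset.range (b + 1 - a),
      fav k w (a + j) = gval (w (a - 1 + (j + 1))) - gval (w (a - 1 + j)) := by
    intro j hj
    simp only [Finset.mem_range] at hj
    have e1 : a - 1 + (j + 1) = a + j := by omega
    have e2 : a - 1 + j = a + j - 1 := by omega
    rw [e1, e2, fav_interior k hk w (a + j) (by omega) (by omega)]
  rw [Finset.sum_congr rfl hterm, Finset.sum_range_sub (fun j => gval (w (a - 1 + j)))]
  have e3 : a - 1 + (b + 1 - a) = b := by omega
  have e4 : a - 1 + 0 = a - 1 := by omega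
  rw [e3, e4]
  rcases hcuts with ⟨h1, h2⟩ | ⟨h1, h2⟩ <;> rw [h1, h2] <;> ring
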